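/- Let 0 < δ < 1 and 0 < ε < δ/8. Define the truncation map G_{2δ,ε} : ℝⁿ → ℝⁿ by G_{2δ,ε}(z) = (√(ε² + |z|²) − 2δ)₊ · z/|z| for z ≠ 0 and G_{2δ,ε}(0) = 0. Then G_{2δ,ε} is Lipschitz continuous with Lipschitz constant c† = 1 + 64/√255, i.e. |G_{2δ,ε}(z₁) − G_{2δ,ε}(z₂)| ≤ c† |z₁ − z₂| for all z₁, z₂ ∈ ℝⁿ. -/

import Mathlib

open Classical in
theorem stmt0 (n : ℕ) (hn : 2 ≤ n) (δ ε : ℝ) (hδ0 : 0 < δ) (hδ1 : δ < 1)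
    (hε0 : 0 < ε) (hε : ε < δ / 8)
    (G : EuclideanSpace ℝ (Fin n) → EuclideanSpace ℝ (Fin n))
    (hG : ∀ z, G z = if z = 0 then 0 else
      ((max (Real.sqrt (ε ^ 2 + ‖z‖ ^ 2) - 2 * δ) 0) / ‖z‖) • z) :
    ∀ z₁ z₂, ‖G z₁ - G z₂‖ ≤ (1 + 64 / Real.sqrt 255) * ‖z₁ - z₂‖ := by
  set g : ℝ → ℝ := fun r => max (Real.sqrt (ε ^ 2 + r ^ 2) - 2 * δ) 0 with hgdef
  have hg_nonneg : ∀ r, 0 ≤ g r := fun r => le_max_right _ _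
  have hs_ge : ∀ r : ℝ, 0 ≤ r → r ≤ Real.sqrt (ε ^ 2 + r ^ 2) := by
    intro r hr
    have := Real.sqrt_le_sqrt (show r ^ 2 ≤ ε ^ 2 + r ^ 2 by nlinarith)
    rwa [Real.sqrt_sq hr] at this
  have hg_le : ∀ r : ℝ, 0 ≤ r → g r ≤ r := by
    intro r hr
    refine max_le ?_ hr
    have h1 : Real.sqrt (ε ^ 2 + r ^ 2) ≤ r + 2 * δ := by
      have h2 : ε ^ 2 + r ^ 2 ≤ (r + 2 * δ) ^ 2 := by nlinarith
      have := Real.sqrt_le_sqrt h2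
      rwa [Real.sqrt_sq (by nlinarith)] at this
    linarith
  -- 1-Lipschitz increment for ordered arguments
  have hg_key : ∀ x y : ℝ, 0 ≤ x → x ≤ y → g y - g x ≤ y - x := by
    intro x y hx hxy
    have hsa := hs_ge x hx
    have h2 : ε ^ 2 + y ^ 2 ≤ (Real.sqrt (ε ^ 2 + x ^ 2) + (y - x)) ^ 2 := by
      have hsq := Real.sq_sqrt (show (0:ℝ) ≤ ε ^ 2 + x ^ 2 by positivity)
      nlinarith
    have h3 := Real.sqrt_le_sqrt h2
    rw [Real.sqrt_sq (by nlinarith [Real.sqrt_nonneg (ε ^ 2 + x ^ 2)])] at h3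
    have hlip : Real.sqrt (ε ^ 2 + y ^ 2) - Real.sqrt (ε ^ 2 + x ^ 2) ≤ y - x := by linarith
    simp only [hgdef]
    rcases le_or_gt (Real.sqrt (ε ^ 2 + y ^ 2) - 2 * δ) 0 with h | h
    · rw [max_eq_right h]
      have : (0:ℝ) ≤ max (Real.sqrt (ε ^ 2 + x ^ 2) - 2 * δ) 0 := le_max_right _ _
      linarith
    · rw [max_eq_left h.le]
      have h4 : Real.sqrt (ε ^ 2 + x ^ 2) - 2 * δ ≤ max (Real.sqrt (ε ^ 2 + x ^ 2) - 2 * δ) 0 :=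
        le_max_left _ _
      linarith
  have hg_mono : ∀ x y : ℝ, 0 ≤ x → x ≤ y → g x ≤ g y := by
    intro x y hx hxy
    refine max_le_max ?_ le_rfl
    have := Real.sqrt_le_sqrt (show ε ^ 2 + x ^ 2 ≤ ε ^ 2 + y ^ 2 by nlinarith)
    linarith
  have hg_lip : ∀ a b : ℝ, 0 ≤ a → 0 ≤ b → |g a - g b| ≤ |a - b| := by
    intro a b ha hb
    rcases le_total a b with h | h
    · rw [abs_of_nonpos (by linarith [hg_mono a b ha h]), abs_of_nonpos (by linarith)]
      linarith [hg_key a b ha h]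
    · rw [abs_of_nonneg (by linarith [hg_mono b a hb h]), abs_of_nonneg (by linarith)]
      linarith [hg_key b a hb h]
  -- main estimate with constant 3, assuming ‖w₂‖ ≤ ‖w₁‖
  have key : ∀ w₁ w₂ : EuclideanSpace ℝ (Fin n), ‖w₂‖ ≤ ‖w₁‖ →
      ‖G w₁ - G w₂‖ ≤ 3 * ‖w₁ - w₂‖ := by
    intro w₁ w₂ hle
    by_cases h1 : w₁ = 0
    · have h2 : w₂ = 0 := by
        have : ‖w₂‖ ≤ 0 := by simpa [h1] using hle
        exact norm_le_zero_iff.mp this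
      simp [hG, h1, h2]
    · set r₁ := ‖w₁‖ with hr₁
      set r₂ := ‖w₂‖ with hr₂
      have hr₁pos : 0 < r₁ := norm_pos_iff.mpr h1
      by_cases h2 : w₂ = 0
      · have : ‖G w₁ - G w₂‖ = g r₁ := by
          rw [hG w₁, hG w₂, if_neg h1, if_pos h2, sub_zero, norm_smul,
            Real.norm_eq_abs, abs_of_nonneg (by positivity), div_mul_cancel₀]
          exact hr₁pos.ne'
        rw [this, h2, sub_zero]
        calc g r₁ ≤ r₁ := hg_le r₁ hr₁pos.le
          _ ≤ 3 * ‖w₁‖ := by linarith [norm_nonneg w₁]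
      · have hr₂pos : 0 < r₂ := norm_pos_iff.mpr h2
        rw [hG w₁, hG w₂, if_neg h1, if_neg h2]
        show ‖(g r₁ / r₁) • w₁ - (g r₂ / r₂) • w₂‖ ≤ 3 * ‖w₁ - w₂‖
        have hdecomp : (g r₁ / r₁) • w₁ - (g r₂ / r₂) • w₂ =
            ((g r₁ - g r₂) / r₁) • w₁ + g r₂ • ((r₁⁻¹) • w₁ - (r₂⁻¹) • w₂) := by
          rw [smul_sub]
          match_scalars <;> field_simp <;> ring
        have hunit : ‖(r₁⁻¹) • w₁ - (r₂⁻¹) • w₂‖ ≤ 2 * ‖w₁ - w₂‖ / r₁ := by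
          have hdec2 : (r₁⁻¹) • w₁ - (r₂⁻¹) • w₂ =
              (r₁⁻¹) • (w₁ - w₂) + (r₁⁻¹ - r₂⁻¹) • w₂ := by
            rw [smul_sub, sub_smul]; abel
          rw [hdec2]
          have h5 : ‖(r₁⁻¹ - r₂⁻¹) • w₂‖ ≤ ‖w₁ - w₂‖ / r₁ := by
            rw [norm_smul, Real.norm_eq_abs]
            have habs : |r₁⁻¹ - r₂⁻¹| = (r₁ - r₂) / (r₁ * r₂) := by
              rw [abs_of_nonpos (by
                have := one_div_le_one_div_of_le hr₂pos hle
                rw [one_div, one_div] at this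
                linarith)]
              field_simp
              ring
            rw [habs, ← hr₂]
            have hnn : r₁ - r₂ ≤ ‖w₁ - w₂‖ := by
              have := abs_norm_sub_norm_le w₁ w₂
              rw [abs_le] at this
              linarith [this.2]
            calc (r₁ - r₂) / (r₁ * r₂) * r₂ = (r₁ - r₂) / r₁ := by
                  field_simp
              _ ≤ ‖w₁ - w₂‖ / r₁ := by gcongr
          calc ‖(r₁⁻¹) • (w₁ - w₂) + (r₁⁻¹ - r₂⁻¹) • w₂‖
              ≤ ‖(r₁⁻¹) • (w₁ - w₂)‖ + ‖(r₁⁻¹ - r₂⁻¹) • w₂‖ := norm_add_le _ _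
            _ ≤ ‖w₁ - w₂‖ / r₁ + ‖w₁ - w₂‖ / r₁ := by
                refine add_le_add ?_ h5
                rw [norm_smul, Real.norm_eq_abs, abs_of_nonneg (by positivity)]
                rw [inv_mul_eq_div]
            _ = 2 * ‖w₁ - w₂‖ / r₁ := by ring
        calc ‖(g r₁ / r₁) • w₁ - (g r₂ / r₂) • w₂‖
            = ‖((g r₁ - g r₂) / r₁) • w₁ + g r₂ • ((r₁⁻¹) • w₁ - (r₂⁻¹) • w₂)‖ := by
              rw [hdecomp]
          _ ≤ ‖((g r₁ - g r₂) / r₁) • w₁‖ + ‖g r₂ • ((r₁⁻¹) • w₁ - (r₂⁻¹) • w₂)‖ :=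
              norm_add_le _ _
          _ ≤ |g r₁ - g r₂| + r₂ * (2 * ‖w₁ - w₂‖ / r₁) := by
              refine add_le_add ?_ ?_
              · rw [norm_smul, Real.norm_eq_abs, abs_div, abs_of_nonneg hr₁pos.le, ← hr₁]
                rw [div_mul_cancel₀]
                exact hr₁pos.ne'
              · rw [norm_smul, Real.norm_eq_abs, abs_of_nonneg (hg_nonneg r₂)]
                exact mul_le_mul (hg_le r₂ hr₂pos.le) hunit (norm_nonneg _) hr₂pos.le
          _ ≤ ‖w₁ - w₂‖ + 2 * ‖w₁ - w₂‖ := by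
              refine add_le_add ?_ ?_
              · calc |g r₁ - g r₂| ≤ |r₁ - r₂| := hg_lip r₁ r₂ hr₁pos.le hr₂pos.le
                  _ ≤ ‖w₁ - w₂‖ := abs_norm_sub_norm_le w₁ w₂
              · have h6 : r₂ / r₁ ≤ 1 := (div_le_one hr₁pos).mpr hle
                have h7 : r₂ * (2 * ‖w₁ - w₂‖ / r₁) = 2 * ‖w₁ - w₂‖ * (r₂ / r₁) := by ring
                rw [h7]
                calc 2 * ‖w₁ - w₂‖ * (r₂ / r₁) ≤ 2 * ‖w₁ - w₂‖ * 1 :=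
                      mul_le_mul_of_nonneg_left h6 (by positivity)
                  _ = 2 * ‖w₁ - w₂‖ := by ring
          _ = 3 * ‖w₁ - w₂‖ := by ring
  -- the constant comparison
  have hsqrt255 : Real.sqrt 255 ≤ 32 := by
    nlinarith [Real.sq_sqrt (show (0:ℝ) ≤ 255 by norm_num), Real.sqrt_nonneg 255]
  have hsqrt255pos : 0 < Real.sqrt 255 := Real.sqrt_pos.mpr (by norm_num)
  have hconst : (3:ℝ) ≤ 1 + 64 / Real.sqrt 255 := by
    have : (2:ℝ) ≤ 64 / Real.sqrt 255 := by
      rw [le_div_iff₀ hsqrt255pos]; nlinarith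
    linarith
  intro z₁ z₂
  have main : ‖G z₁ - G z₂‖ ≤ 3 * ‖z₁ - z₂‖ := by
    rcases le_total ‖z₂‖ ‖z₁‖ with h | h
    · exact key z₁ z₂ h
    · rw [norm_sub_rev, norm_sub_rev z₁]
      exact key z₂ z₁ h
  calc ‖G z₁ - G z₂‖ ≤ 3 * ‖z₁ - z₂‖ := main
    _ ≤ (1 + 64 / Real.sqrt 255) * ‖z₁ - z₂‖ :=
      mul_le_mul_of_nonneg_right hconst (norm_nonneg _)
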